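/- arXiv:2109.01787 — 6 statements merged into one kernel-verified Lean document; each statement's English description precedes it below -/
import Mathlib

section
/- Let A = [[0,0,-t⁻¹],[0,-t,-t⁻¹+t],[-1,0,-t⁻¹+1]], B = [[-t⁻¹,1,0],[0,1,0],[0,1,-t]], and T = [[-1,1,0],[-1,0,1],[-1,0,0]] be matrices over ℤ[t,t⁻¹]. Then A = T B T⁻¹, A⁻¹ = T⁻¹ B T, and B⁻¹ = T² B T². -/
open LaurentPolynomial

/-- `t` in the Laurent polynomial ring `ℤ[t,t⁻¹]`. -/
noncomputable def tt : LaurentPolynomial ℤ := T 1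

/-- `t⁻¹` in the Laurent polynomial ring `ℤ[t,t⁻¹]`. -/
noncomputable def tinv : LaurentPolynomial ℤ := T (-1)

/-- The reduced Burau image `A` of `α = σ₁σ₂σ₃⁻¹σ₁σ₂⁻¹σ₁⁻¹`. -/
noncomputable def A : Matrix (Fin 3) (Fin 3) (LaurentPolynomial ℤ) :=
  !![0, 0, -tinv; 0, -tt, -tinv + tt; -1, 0, -tinv + 1]

/-- The reduced Burau image `B` of `β = σ₃σ₁⁻¹`. -/
noncomputable def B : Matrix (Fin 3) (Fin 3) (LaurentPolynomial ℤ) :=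
  !![-tinv, 1, 0; 0, 1, 0; 0, 1, -tt]

/-- The order-four integer matrix `T`. -/
noncomputable def Tmat : Matrix (Fin 3) (Fin 3) (LaurentPolynomial ℤ) :=
  !![-1, 1, 0; -1, 0, 1; -1, 0, 0]

noncomputable def Tinv : Matrix (Fin 3) (Fin 3) (LaurentPolynomial ℤ) :=
  !![0, 0, -1; 1, 0, -1; 0, 1, -1]

noncomputable def Ainv : Matrix (Fin 3) (Fin 3) (LaurentPolynomial ℤ) :=
  !![1 - tt, 0, -1; -tt + tinv, -tinv, 0; -tt, 0, 0]

noncomputable def Binv : Matrix (Fin 3) (Fin 3) (LaurentPolynomial ℤ) :=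
  !![-tt, tt, 0; 0, 1, 0; 0, tinv, -tinv]

lemma key : tt * tinv = 1 := by
  rw [tt, tinv, ← T_add]; norm_num

lemma hT : Tmat * Tinv = 1 := by
  refine Matrix.ext fun i j => ?_
  fin_cases i <;> fin_cases j <;>
    simp [Tmat, Tinv, Matrix.mul_apply, Fin.sum_univ_succ]

lemma hA : A * Ainv = 1 := by
  refine Matrix.ext fun i j => ?_
  fin_cases i <;> fin_cases j <;>
    simp [A, Ainv, Matrix.mul_apply, Fin.sum_univ_succ] <;>
    first
      | ring1
      | linear_combination key
      | linear_combination -key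
      | linear_combination (2 : LaurentPolynomial ℤ) * key
      | linear_combination (-2 : LaurentPolynomial ℤ) * key
      | linear_combination tt * key
      | linear_combination -tt * key
      | linear_combination tinv * key
      | linear_combination -tinv * key

lemma hT2 : Tmat ^ 2 = !![0, -1, 1; 0, -1, 0; 1, -1, 0] := by
  rw [pow_two]
  refine Matrix.ext fun i j => ?_
  fin_cases i <;> fin_cases j <;>
    simp [Tmat, Matrix.mul_apply, Fin.sum_univ_succ, Matrix.vecHead, Matrix.vecTail]

lemma hB : B * Binv = 1 := by
  refine Matrix.ext fun i j => ?_
  fin_cases i <;> fin_cases j <;>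
    simp [B, Binv, Matrix.mul_apply, Fin.sum_univ_succ] <;>
    first
      | ring1
      | linear_combination key
      | linear_combination -key
      | linear_combination (2 : LaurentPolynomial ℤ) * key
      | linear_combination (-2 : LaurentPolynomial ℤ) * key
      | linear_combination tt * key
      | linear_combination -tt * key
      | linear_combination tinv * key
      | linear_combination -tinv * key

set_option maxHeartbeats 2000000 in
/-- `A = T B T⁻¹`, `A⁻¹ = T⁻¹ B T`, and `B⁻¹ = T² B T²`. -/
theorem conjugation_relations :
    A = Tmat * B * Tmat⁻¹ ∧ A⁻¹ = Tmat⁻¹ * B * Tmat ∧ B⁻¹ = Tmat ^ 2 * B * Tmat ^ 2 := by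
  rw [Matrix.inv_eq_right_inv hT, Matrix.inv_eq_right_inv hA, Matrix.inv_eq_right_inv hB]
  refine ⟨?_, ?_, ?_⟩ <;>
  · refine Matrix.ext fun i j => ?_
    fin_cases i <;> fin_cases j <;>
      simp only [hT2] <;>
      simp [A, B, Tmat, Tinv, Ainv, Binv, Matrix.mul_apply, Fin.sum_univ_succ,
        Matrix.vecHead, Matrix.vecTail] <;>
      first
      | ring1
      | linear_combination key
      | linear_combination -key
      | linear_combination (2 : LaurentPolynomial ℤ) * key
      | linear_combination (-2 : LaurentPolynomial ℤ) * key
      | linear_combination tt * key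
      | linear_combination -tt * key
      | linear_combination tinv * key
      | linear_combination -tinv * key
end

section
/- Let G be a group and s₁, s₂, s₃ ∈ G satisfy the B₄ braid relations. Then α = τ⁻¹βτ, where α = s₁s₂s₃⁻¹s₁s₂⁻¹s₁⁻¹, β = s₃s₁⁻¹, and τ = s₁s₂s₃. -/
/-- If `s₁, s₂, s₃` satisfy the `B₄` braid relations, then `α = τ⁻¹βτ` where
`α = s₁s₂s₃⁻¹s₁s₂⁻¹s₁⁻¹`, `β = s₃s₁⁻¹`, `τ = s₁s₂s₃`. -/
theorem alpha_eq_tau_inv_beta_tau {G : Type*} [Group G] (s₁ s₂ s₃ : G)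
    (h₁₂ : s₁ * s₂ * s₁ = s₂ * s₁ * s₂)
    (h₂₃ : s₂ * s₃ * s₂ = s₃ * s₂ * s₃)
    (h₁₃ : s₁ * s₃ = s₃ * s₁) :
    s₁ * s₂ * s₃⁻¹ * s₁ * s₂⁻¹ * s₁⁻¹
      = (s₁ * s₂ * s₃)⁻¹ * (s₃ * s₁⁻¹) * (s₁ * s₂ * s₃) := by
  have C : Commute s₁ s₃ := h₁₃
  have c1 : s₃⁻¹ * s₁ = s₁ * s₃⁻¹ := (C.inv_right.eq).symm
  have c2 : s₁⁻¹ * s₃ = s₃ * s₁⁻¹ := C.inv_left.eq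
  have e1 : s₂ * s₃⁻¹ * s₂⁻¹ = s₃⁻¹ * s₂⁻¹ * s₃ := by
    apply mul_left_cancel (a := s₃)
    apply mul_right_cancel (b := s₂ * s₃)
    calc s₃ * (s₂ * s₃⁻¹ * s₂⁻¹) * (s₂ * s₃) = s₃ * s₂ := by group
    _ = s₂⁻¹ * (s₂ * s₃ * s₂) := by group
    _ = s₂⁻¹ * (s₃ * s₂ * s₃) := by rw [h₂₃]
    _ = s₃ * (s₃⁻¹ * s₂⁻¹ * s₃) * (s₂ * s₃) := by group
  have e2 : s₁ * s₂⁻¹ * s₁⁻¹ = s₂⁻¹ * s₁⁻¹ * s₂ := by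
    apply mul_left_cancel (a := s₂)
    apply mul_right_cancel (b := s₁ * s₂)
    calc s₂ * (s₁ * s₂⁻¹ * s₁⁻¹) * (s₁ * s₂) = s₂ * s₁ := by group
    _ = s₁⁻¹ * (s₁ * s₂ * s₁) := by group
    _ = s₁⁻¹ * (s₂ * s₁ * s₂) := by rw [h₁₂]
    _ = s₂ * (s₂⁻¹ * s₁⁻¹ * s₂) * (s₁ * s₂) := by group
  calc s₁ * s₂ * s₃⁻¹ * s₁ * s₂⁻¹ * s₁⁻¹
      = s₁ * s₂ * (s₃⁻¹ * s₁) * (s₂⁻¹ * s₁⁻¹) := by group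
    _ = s₁ * s₂ * (s₁ * s₃⁻¹) * (s₂⁻¹ * s₁⁻¹) := by rw [c1]
    _ = (s₁ * s₂ * s₁) * (s₃⁻¹ * s₂⁻¹ * s₁⁻¹) := by group
    _ = (s₂ * s₁ * s₂) * (s₃⁻¹ * s₂⁻¹ * s₁⁻¹) := by rw [h₁₂]
    _ = s₂ * s₁ * (s₂ * s₃⁻¹ * s₂⁻¹) * s₁⁻¹ := by group
    _ = s₂ * s₁ * (s₃⁻¹ * s₂⁻¹ * s₃) * s₁⁻¹ := by rw [e1]
    _ = s₂ * (s₁ * s₃⁻¹) * s₂⁻¹ * (s₃ * s₁⁻¹) := by group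
    _ = s₂ * (s₃⁻¹ * s₁) * s₂⁻¹ * (s₁⁻¹ * s₃) := by rw [c1, c2]
    _ = s₂ * s₃⁻¹ * (s₁ * s₂⁻¹ * s₁⁻¹) * s₃ := by group
    _ = s₂ * s₃⁻¹ * (s₂⁻¹ * s₁⁻¹ * s₂) * s₃ := by rw [e2]
    _ = (s₂ * s₃⁻¹ * s₂⁻¹) * s₁⁻¹ * (s₂ * s₃) := by group
    _ = (s₃⁻¹ * s₂⁻¹ * s₃) * s₁⁻¹ * (s₂ * s₃) := by rw [e1]
    _ = s₃⁻¹ * s₂⁻¹ * (s₃ * s₁⁻¹) * (s₂ * s₃) := by group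
    _ = s₃⁻¹ * s₂⁻¹ * (s₁⁻¹ * s₃) * (s₂ * s₃) := by rw [← c2]
    _ = (s₁ * s₂ * s₃)⁻¹ * (s₃ * s₁⁻¹) * (s₁ * s₂ * s₃) := by group
end

section
/- Let G be a group and s₁, s₂, s₃ ∈ G satisfy the B₄ braid relations. Then α⁻¹ = τβτ⁻¹, where α = s₁s₂s₃⁻¹s₁s₂⁻¹s₁⁻¹, β = s₃s₁⁻¹, and τ = s₁s₂s₃. -/
/-- If `s₁, s₂, s₃` satisfy the `B₄` braid relations, then `α⁻¹ = τβτ⁻¹` where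
`α = s₁s₂s₃⁻¹s₁s₂⁻¹s₁⁻¹`, `β = s₃s₁⁻¹`, `τ = s₁s₂s₃`. -/
theorem alpha_inv_eq_tau_beta_tau_inv {G : Type*} [Group G] (s₁ s₂ s₃ : G)
    (h₁₂ : s₁ * s₂ * s₁ = s₂ * s₁ * s₂)
    (h₂₃ : s₂ * s₃ * s₂ = s₃ * s₂ * s₃)
    (h₁₃ : s₁ * s₃ = s₃ * s₁) :
    (s₁ * s₂ * s₃⁻¹ * s₁ * s₂⁻¹ * s₁⁻¹)⁻¹
      = (s₁ * s₂ * s₃) * (s₃ * s₁⁻¹) * (s₁ * s₂ * s₃)⁻¹ := by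
  have c : s₁⁻¹ * s₃ = s₃ * s₁⁻¹ := (Commute.inv_left (h₁₃ : Commute s₁ s₃)).eq
  have d : s₃ * s₁⁻¹ * s₃⁻¹ = s₁⁻¹ := by rw [← c]; group
  calc (s₁ * s₂ * s₃⁻¹ * s₁ * s₂⁻¹ * s₁⁻¹)⁻¹
      = s₁ * s₂ * (s₁⁻¹ * s₃) * s₂⁻¹ * s₁⁻¹ := by group
    _ = s₁ * s₂ * s₃ * (s₃ * s₁⁻¹ * s₃⁻¹) * s₂⁻¹ * s₁⁻¹ := by rw [d, c]; group
    _ = (s₁ * s₂ * s₃) * (s₃ * s₁⁻¹) * (s₁ * s₂ * s₃)⁻¹ := by group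
end

section
/- Let G be a group and s₁, s₂, s₃ ∈ G satisfy the B₄ braid relations. Then β⁻¹ = τ²βτ⁻², where β = s₃s₁⁻¹ and τ = s₁s₂s₃. -/
/-- If `s₁, s₂, s₃` satisfy the `B₄` braid relations, then `β⁻¹ = τ²βτ⁻²` where
`β = s₃s₁⁻¹` and `τ = s₁s₂s₃`. -/
theorem beta_inv_eq_tau_sq_beta_tau_inv_sq {G : Type*} [Group G] (s₁ s₂ s₃ : G)
    (h₁₂ : s₁ * s₂ * s₁ = s₂ * s₁ * s₂)
    (h₂₃ : s₂ * s₃ * s₂ = s₃ * s₂ * s₃)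
    (h₁₃ : s₁ * s₃ = s₃ * s₁) :
    (s₃ * s₁⁻¹)⁻¹ = (s₁ * s₂ * s₃) ^ 2 * (s₃ * s₁⁻¹) * ((s₁ * s₂ * s₃) ^ 2)⁻¹ := by
  have c13 : ∀ x : G, s₃ * (s₁ * x) = s₁ * (s₃ * x) := by
    intro x; rw [← mul_assoc, ← h₁₃, mul_assoc]
  have b12 : ∀ x : G, s₁ * (s₂ * (s₁ * x)) = s₂ * (s₁ * (s₂ * x)) := by
    intro x; rw [← mul_assoc, ← mul_assoc, h₁₂, mul_assoc, mul_assoc]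
  have b23 : ∀ x : G, s₃ * (s₂ * (s₃ * x)) = s₂ * (s₃ * (s₂ * x)) := by
    intro x; rw [← mul_assoc, ← mul_assoc, ← h₂₃, mul_assoc, mul_assoc]
  have b23' : s₃ * (s₂ * s₃) = s₂ * (s₃ * s₂) := by
    rw [← mul_assoc, ← h₂₃, mul_assoc]
  set T : G := s₁ * s₂ * s₃ * (s₁ * s₂ * s₃) with hT
  have k1 : s₁ * T = T * s₃ := by
    rw [hT]; simp only [mul_assoc]
    rw [c13, b23', b12, c13, b23, b23']
  have k2 : T * s₁ = s₃ * T := by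
    rw [hT]; simp only [mul_assoc]
    conv_rhs => rw [c13, b23, ← b12, h₁₃]
  have key : T * (s₃ * s₁⁻¹) = (s₁ * s₃⁻¹) * T := by
    have h1 : T * s₁⁻¹ = s₃⁻¹ * T := by
      rw [mul_inv_eq_iff_eq_mul, mul_assoc, eq_inv_mul_iff_mul_eq]
      exact k2.symm
    rw [← mul_assoc, ← k1, mul_assoc, h1, ← mul_assoc]
  rw [pow_two, mul_inv_rev, inv_inv, ← hT, key, mul_assoc, mul_inv_cancel, mul_one]
end

section
/- Let G be a group and s₁, s₂, s₃ ∈ G satisfy the B₄ braid relations. Then the subgroup generated by α = s₁s₂s₃⁻¹s₁s₂⁻¹s₁⁻¹ and β = s₃s₁⁻¹ is contained in the subgroup generated by τ = s₁s₂s₃ and Δ = s₁s₂s₃s₁s₂s₁. -/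
/-- If `s₁, s₂, s₃` satisfy the `B₄` braid relations, then the subgroup generated
by `α = s₁s₂s₃⁻¹s₁s₂⁻¹s₁⁻¹` and `β = s₃s₁⁻¹` is contained in the subgroup
generated by `τ = s₁s₂s₃` and `Δ = s₁s₂s₃s₁s₂s₁`. -/
theorem closure_alpha_beta_le_closure_tau_Delta {G : Type*} [Group G] (s₁ s₂ s₃ : G)
    (h₁₂ : s₁ * s₂ * s₁ = s₂ * s₁ * s₂)
    (h₂₃ : s₂ * s₃ * s₂ = s₃ * s₂ * s₃)
    (h₁₃ : s₁ * s₃ = s₃ * s₁) :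
    Subgroup.closure ({s₁ * s₂ * s₃⁻¹ * s₁ * s₂⁻¹ * s₁⁻¹, s₃ * s₁⁻¹} : Set G)
      ≤ Subgroup.closure ({s₁ * s₂ * s₃, s₁ * s₂ * s₃ * s₁ * s₂ * s₁} : Set G) := by
  have H12 : ∀ x : G, s₁ * (s₂ * (s₁ * x)) = s₂ * (s₁ * (s₂ * x)) := by
    intro x; simp only [← mul_assoc, h₁₂]
  have H23 : ∀ x : G, s₂ * (s₃ * (s₂ * x)) = s₃ * (s₂ * (s₃ * x)) := by
    intro x; simp only [← mul_assoc, h₂₃]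
  have H13 : ∀ x : G, s₁ * (s₃ * x) = s₃ * (s₁ * x) := by
    intro x; simp only [← mul_assoc, h₁₃]
  have e13 : s₃⁻¹ * s₁ = s₁ * s₃⁻¹ := by
    rw [eq_comm, mul_inv_eq_iff_eq_mul, mul_assoc, h₁₃, inv_mul_cancel_left]
  have C13 : ∀ x : G, s₃⁻¹ * (s₁ * x) = s₁ * (s₃⁻¹ * x) := by
    intro x; rw [← mul_assoc, ← mul_assoc, e13]
  set τ := s₁ * s₂ * s₃ with hτ
  set Δ := s₁ * s₂ * s₃ * s₁ * s₂ * s₁ with hΔ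
  have hτmem : τ ∈ Subgroup.closure ({τ, Δ} : Set G) :=
    Subgroup.subset_closure (Set.mem_insert _ _)
  have hΔmem : Δ ∈ Subgroup.closure ({τ, Δ} : Set G) :=
    Subgroup.subset_closure (Set.mem_insert_of_mem _ rfl)
  have hα : s₁ * s₂ * s₃⁻¹ * s₁ * s₂⁻¹ * s₁⁻¹ = τ⁻¹ * Δ * τ⁻¹ := by
    rw [hτ, hΔ]
    simp only [mul_assoc, mul_inv_rev, inv_mul_cancel_left, mul_inv_cancel_left]
    rw [C13]
  have hβ : s₃ * s₁⁻¹ = Δ * τ⁻¹ * τ⁻¹ := by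
    have key : s₃ * s₁⁻¹ * τ * τ = Δ := by
      rw [hτ, hΔ]
      simp only [mul_assoc, mul_inv_cancel_left, inv_mul_cancel_left]
      rw [← H23, ← H12, ← H13 (s₂ * (s₁ * s₃)), h₁₃, ← H23, ← H12, H13]
    rw [← key]; group
  rw [Subgroup.closure_le]
  rintro x (rfl | rfl)
  · exact hα ▸ Subgroup.mul_mem _ (Subgroup.mul_mem _ (Subgroup.inv_mem _ hτmem) hΔmem)
      (Subgroup.inv_mem _ hτmem)
  · exact hβ ▸ Subgroup.mul_mem _ (Subgroup.mul_mem _ hΔmem (Subgroup.inv_mem _ hτmem))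
      (Subgroup.inv_mem _ hτmem)
end

section
/- Let B₄ be the presented group on generators σ₁, σ₂, σ₃ with relations σ₁σ₂σ₁ = σ₂σ₁σ₂, σ₂σ₃σ₂ = σ₃σ₂σ₃, σ₁σ₃ = σ₃σ₁, and let ψ : B₄ → GL(3, ℤ[t,t⁻¹]) be a group homomorphism with ψ(σᵢ) equal to the reduced Burau matrix Mᵢ for i = 1, 2, 3. Assume (as established by Bigelow and Bokut–Vesnin) that the kernel of ψ is contained in the subgroup generated by α = σ₁σ₂σ₃⁻¹σ₁σ₂⁻¹σ₁⁻¹ and β = σ₃σ₁⁻¹. Then the kernel of ψ is contained in the subgroup G of B₄ generated by τ = σ₁σ₂σ₃ and Δ = σ₁σ₂σ₃σ₁σ₂σ₁. -/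
open LaurentPolynomial

/-- The braid relators of `B₄` in the free group on three generators. -/
def braidRels : Set (FreeGroup (Fin 3)) :=
  { FreeGroup.of 0 * FreeGroup.of 1 * FreeGroup.of 0 *
      (FreeGroup.of 1 * FreeGroup.of 0 * FreeGroup.of 1)⁻¹,
    FreeGroup.of 1 * FreeGroup.of 2 * FreeGroup.of 1 *
      (FreeGroup.of 2 * FreeGroup.of 1 * FreeGroup.of 2)⁻¹,
    FreeGroup.of 0 * FreeGroup.of 2 * (FreeGroup.of 2 * FreeGroup.of 0)⁻¹ }

/-- The braid group `B₄`, presented on `σ₁, σ₂, σ₃` with the braid relations. -/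
abbrev B₄ : Type := PresentedGroup braidRels

/-- The standard generators `σ₁, σ₂, σ₃` of `B₄` (indexed by `Fin 3`). -/
def σ (i : Fin 3) : B₄ := PresentedGroup.of i

/-- Reduced Burau matrix of `σ₁`. -/
noncomputable def M₁ : Matrix (Fin 3) (Fin 3) (LaurentPolynomial ℤ) :=
  !![-tt, tt, 0; 0, 1, 0; 0, 0, 1]

/-- Reduced Burau matrix of `σ₂`. -/
noncomputable def M₂ : Matrix (Fin 3) (Fin 3) (LaurentPolynomial ℤ) :=
  !![1, 0, 0; 1, -tt, tt; 0, 0, 1]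

/-- Reduced Burau matrix of `σ₃`. -/
noncomputable def M₃ : Matrix (Fin 3) (Fin 3) (LaurentPolynomial ℤ) :=
  !![1, 0, 0; 0, 1, 0; 0, 1, -tt]

/-- `α = σ₁σ₂σ₃⁻¹σ₁σ₂⁻¹σ₁⁻¹`. -/
def α : B₄ := σ 0 * σ 1 * (σ 2)⁻¹ * σ 0 * (σ 1)⁻¹ * (σ 0)⁻¹

/-- `β = σ₃σ₁⁻¹`. -/
def β : B₄ := σ 2 * (σ 0)⁻¹

/-- `τ = σ₁σ₂σ₃`. -/
def τ : B₄ := σ 0 * σ 1 * σ 2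

/-- `Δ = σ₁σ₂σ₃σ₁σ₂σ₁`. -/
def Δ : B₄ := σ 0 * σ 1 * σ 2 * σ 0 * σ 1 * σ 0

/-- `θ = τ⁴`, the full twist generating the center of `B₄`. -/
def θ : B₄ := τ ^ 4


lemma rel_of_mem {r : FreeGroup (Fin 3)} (hr : r ∈ braidRels) :
    (QuotientGroup.mk r : B₄) = 1 :=
  (QuotientGroup.eq_one_iff r).mpr (Subgroup.subset_normalClosure hr)

lemma braid_r1 : σ 0 * σ 1 * σ 0 = σ 1 * σ 0 * σ 1 := by
  have h := rel_of_mem (by left; rfl)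
  rw [show (QuotientGroup.mk (FreeGroup.of 0 * FreeGroup.of 1 * FreeGroup.of 0 *
      (FreeGroup.of 1 * FreeGroup.of 0 * FreeGroup.of 1)⁻¹) : B₄)
      = σ 0 * σ 1 * σ 0 * (σ 1 * σ 0 * σ 1)⁻¹ from rfl] at h
  exact mul_inv_eq_one.mp h

lemma braid_r2 : σ 1 * σ 2 * σ 1 = σ 2 * σ 1 * σ 2 := by
  have h := rel_of_mem (by right; left; rfl)
  rw [show (QuotientGroup.mk (FreeGroup.of 1 * FreeGroup.of 2 * FreeGroup.of 1 *
      (FreeGroup.of 2 * FreeGroup.of 1 * FreeGroup.of 2)⁻¹) : B₄)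
      = σ 1 * σ 2 * σ 1 * (σ 2 * σ 1 * σ 2)⁻¹ from rfl] at h
  exact mul_inv_eq_one.mp h

lemma braid_r3 : σ 0 * σ 2 = σ 2 * σ 0 := by
  have h := rel_of_mem (by right; right; rfl)
  rw [show (QuotientGroup.mk (FreeGroup.of 0 * FreeGroup.of 2 *
      (FreeGroup.of 2 * FreeGroup.of 0)⁻¹) : B₄)
      = σ 0 * σ 2 * (σ 2 * σ 0)⁻¹ from rfl] at h
  exact mul_inv_eq_one.mp h

lemma r1' (x : B₄) : σ 1 * (σ 0 * (σ 1 * x)) = σ 0 * (σ 1 * (σ 0 * x)) := by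
  simp only [← mul_assoc]; rw [braid_r1]
lemma r2' (x : B₄) : σ 2 * (σ 1 * (σ 2 * x)) = σ 1 * (σ 2 * (σ 1 * x)) := by
  simp only [← mul_assoc]; rw [braid_r2]
lemma r3' (x : B₄) : σ 2 * (σ 0 * x) = σ 0 * (σ 2 * x) := by
  simp only [← mul_assoc]; rw [braid_r3]

lemma alpha_eq : α = τ⁻¹ * Δ * τ⁻¹ := by
  have h : τ * α * τ = Δ := by
    unfold τ α Δ
    simp only [mul_assoc, inv_mul_cancel_left, mul_inv_cancel_left]
    rw [braid_r3]
    simp only [inv_mul_cancel_left]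
  rw [← h]; group

lemma beta_eq : β = Δ * τ⁻¹ * τ⁻¹ := by
  have h : β * τ * τ = Δ := by
    unfold τ β Δ
    simp only [mul_assoc, inv_mul_cancel_left]
    rw [r2', r1', r3', braid_r3, r2', r1', ← r3']
  rw [← h]; group

theorem ker_burau_le_closure_tau_Delta
    (ψ : B₄ →* Matrix.GeneralLinearGroup (Fin 3) (LaurentPolynomial ℤ))
    (h₁ : (ψ (σ 0) : Matrix (Fin 3) (Fin 3) (LaurentPolynomial ℤ)) = M₁)
    (h₂ : (ψ (σ 1) : Matrix (Fin 3) (Fin 3) (LaurentPolynomial ℤ)) = M₂)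
    (h₃ : (ψ (σ 2) : Matrix (Fin 3) (Fin 3) (LaurentPolynomial ℤ)) = M₃)
    (hker : ψ.ker ≤ Subgroup.closure ({α, β} : Set B₄)) :
    ψ.ker ≤ Subgroup.closure ({τ, Δ} : Set B₄) := by
  refine le_trans hker ((Subgroup.closure_le _).mpr ?_)
  have hτ : τ ∈ Subgroup.closure ({τ, Δ} : Set B₄) :=
    Subgroup.subset_closure (Set.mem_insert _ _)
  have hΔ : Δ ∈ Subgroup.closure ({τ, Δ} : Set B₄) :=
    Subgroup.subset_closure (Set.mem_insert_of_mem _ rfl)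
  intro x hx
  rcases hx with rfl | rfl
  · rw [alpha_eq]
    exact mul_mem (mul_mem (inv_mem hτ) hΔ) (inv_mem hτ)
  · rw [beta_eq]
    exact mul_mem (mul_mem hΔ (inv_mem hτ)) (inv_mem hτ)
end
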